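/- Adding M new data points to a data set can move the left empirical median only to one of the ⌊M/2⌋ + 1 order statistics immediately to the left or right of the original median: formally, if Y is obtained from an n-point multiset X by adding M points, then m(X ∪ new points) lies between the (ℓ - ⌊M/2⌋ - 1)-th and (ℓ + ⌊M/2⌋ + 1)-th order statistics of X, where ℓ = ⌊n/2⌋ and m denotes the left median. -/

import Mathlib

/-- The left median of a multiset of reals: its `⌊card/2⌋`-th smallest element (1-indexed). -/
noncomputable def multisetLeftMedian (S : Multiset ℝ) : ℝ :=
  (S.sort (· ≤ ·)).getD (S.card / 2 - 1) 0

private lemma aux_emb {n m : ℕ} (f : Fin n ↪o Fin m) :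
    ∀ k (i j : Fin n), (i : ℕ) + k = j → (f i : ℕ) + k ≤ f j := by
  intro k
  induction k with
  | zero =>
    intro i j h
    have : i = j := Fin.ext (by omega)
    simp [this]
  | succ k ih =>
    intro i j h
    have hj : (i : ℕ) + k < n := by omega
    have h1 := ih i ⟨(i : ℕ) + k, hj⟩ rfl
    have h2 : f ⟨(i : ℕ) + k, hj⟩ < f j := f.strictMono (by rw [Fin.lt_def]; simp; omega)
    rw [Fin.lt_def] at h2
    omega

theorem stmt_9 (X A : Multiset ℝ) (n M : ℕ) (hn : X.card = n) (hM : A.card = M)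
    (h1 : M / 2 + 2 ≤ n / 2) (h2 : n / 2 + M / 2 + 1 ≤ n) :
    (X.sort (· ≤ ·)).getD (n / 2 - M / 2 - 2) 0 ≤ multisetLeftMedian (X + A) ∧
    multisetLeftMedian (X + A) ≤ (X.sort (· ≤ ·)).getD (n / 2 + M / 2) 0 := by
  set L := X.sort (· ≤ ·) with hL
  set T := (X + A).sort (· ≤ ·) with hT
  have hLlen : L.length = n := by rw [hL, Multiset.length_sort, hn]
  have hTlen : T.length = n + M := by
    rw [hT, Multiset.length_sort, Multiset.card_add, hn, hM]
  have hLs : L.Pairwise (· ≤ ·) := Multiset.pairwise_sort _ _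
  have hTs : T.Pairwise (· ≤ ·) := Multiset.pairwise_sort _ _
  have hsub : List.Sublist L T := by
    apply List.sublist_of_subperm_of_pairwise _ hLs hTs
    rw [← Multiset.coe_le, Multiset.sort_eq, Multiset.sort_eq]
    exact Multiset.le_add_right _ _
  obtain ⟨f, hf⟩ := List.sublist_iff_exists_fin_orderEmbedding_get_eq.mp hsub
  have hge : ∀ i : Fin L.length, (i : ℕ) ≤ f i := by
    intro i
    have h0 : (0 : ℕ) < L.length := lt_of_le_of_lt (Nat.zero_le _) i.2
    have := aux_emb f (i : ℕ) ⟨0, h0⟩ i (by simp)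
    omega
  have hle : ∀ i : Fin L.length, (f i : ℕ) ≤ (i : ℕ) + M := by
    intro i
    have hlast : L.length - 1 < L.length := by omega
    have := aux_emb f (L.length - 1 - i) i ⟨L.length - 1, hlast⟩ (by simp; omega)
    have h2 := (f ⟨L.length - 1, hlast⟩).2
    omega
  have hcard : (X + A).card = n + M := by rw [Multiset.card_add, hn, hM]
  -- median index in T
  set k : ℕ := (n + M) / 2 - 1 with hk
  have hkT : k < T.length := by rw [hTlen]; omega
  have hmed : multisetLeftMedian (X + A) = T.get ⟨k, hkT⟩ := by
    rw [multisetLeftMedian, hcard, ← hT, List.getD_eq_getElem _ _ (by rw [hTlen]; omega),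
      List.get_eq_getElem]
  set a : ℕ := n / 2 - M / 2 - 2 with ha
  set b : ℕ := n / 2 + M / 2 with hb
  have haL : a < L.length := by rw [hLlen]; omega
  have hbL : b < L.length := by rw [hLlen]; omega
  constructor
  · have e1 : L.getD a 0 = L.get ⟨a, haL⟩ := by
      rw [List.getD_eq_getElem _ _ haL, List.get_eq_getElem]
    rw [e1, hmed, hf ⟨a, haL⟩]
    apply hTs.rel_get_of_le
    have := hle ⟨a, haL⟩
    rw [Fin.le_def]
    simp only at this ⊢
    omega
  · have e1 : L.getD b 0 = L.get ⟨b, hbL⟩ := by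
      rw [List.getD_eq_getElem _ _ hbL, List.get_eq_getElem]
    rw [e1, hmed, hf ⟨b, hbL⟩]
    apply hTs.rel_get_of_le
    have := hge ⟨b, hbL⟩
    rw [Fin.le_def]
    simp only at this ⊢
    omega
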